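/- For any fixed m ≥ 3 and any scoring vector s = (s_1,...,s_m) of reals with s_1 ≥ s_2 ≥ ... ≥ s_m and s_1 > s_m, for any n ≥ 8m + 49 and any pair of distinct alternatives a ≠ b in A = {1,...,m}, there exists a profile P of n linear orders over A such that a is the Condorcet winner of P and b is the unique winner under the positional scoring rule with vector s. -/

import Mathlib

open Finset

namespace Stmt7Aux

lemma sum_map_get {α : Type*} (l : List α) (f : α → ℕ) :
    ∑ i : Fin l.length, f (l.get i) = (l.map f).sum := by
  induction l with
  | nil => simp
  | cons x xs ih =>
      rw [List.map_cons, List.sum_cons, ← ih]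
      exact Fin.sum_univ_succ _

lemma card_filter_eq {α : Type*} {n : ℕ} (l : List α) (h : l.length = n)
    (q : α → Prop) [DecidablePred q] :
    ((univ : Finset (Fin n)).filter fun i => q (l.get (Fin.cast h.symm i))).card
      = (l.map fun v => if q v then (1:ℕ) else 0).sum := by
  subst h
  rw [Finset.card_filter, ← sum_map_get l (fun v => if q v then 1 else 0)]
  rfl

variable {α : Type*} {q : α → Prop} [DecidablePred q]

lemma sum_ind_replicate (N : ℕ) (x : α) :
    ((List.replicate N x).map fun v => if q v then (1:ℕ) else 0).sum
      = if q x then N else 0 := by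
  rw [List.map_replicate, List.sum_replicate]
  split <;> simp

lemma sum_ind_le (l : List α) :
    (l.map fun v => if q v then (1:ℕ) else 0).sum ≤ l.length := by
  induction l with
  | nil => simp
  | cons x xs ih =>
      simp only [List.map_cons, List.sum_cons, List.length_cons]
      split <;> omega

lemma sum_ind_eq_length (l : List α) (h : ∀ x ∈ l, q x) :
    (l.map fun v => if q v then (1:ℕ) else 0).sum = l.length := by
  induction l with
  | nil => simp
  | cons x xs ih =>
      simp only [List.map_cons, List.sum_cons, List.length_cons]
      rw [if_pos (h x (by simp)), ih (fun y hy => h y (by simp [hy]))]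
      omega

lemma sum_ind_eq_zero (l : List α) (h : ∀ x ∈ l, ¬ q x) :
    (l.map fun v => if q v then (1:ℕ) else 0).sum = 0 := by
  induction l with
  | nil => simp
  | cons x xs ih =>
      simp only [List.map_cons, List.sum_cons]
      rw [if_neg (h x (by simp)), ih (fun y hy => h y (by simp [hy]))]

lemma sum_ind_succ_le (l : List α) (h : ∃ x ∈ l, ¬ q x) :
    (l.map fun v => if q v then (1:ℕ) else 0).sum + 1 ≤ l.length := by
  induction l with
  | nil => simp at h
  | cons x xs ih =>
      simp only [List.map_cons, List.sum_cons, List.length_cons]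
      rcases h with ⟨y, hy, hqy⟩
      rcases List.mem_cons.mp hy with rfl | hy'
      · rw [if_neg hqy]
        have := sum_ind_le (q := q) xs
        omega
      · have := ih ⟨y, hy', hqy⟩
        split <;> omega

lemma abel_score {m n : ℕ} (hm : 1 ≤ m) (s : Fin m → ℝ)
    (hmono : ∀ i j : Fin m, i ≤ j → s j ≤ s i)
    (hstrict : s ⟨m - 1, by omega⟩ < s ⟨0, by omega⟩)
    (f g : Fin n → Fin m)
    (h : ∀ t : ℕ, t < m - 1 →
      ((univ : Finset (Fin n)).filter fun i => (g i).val ≤ t).card <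
      ((univ : Finset (Fin n)).filter fun i => (f i).val ≤ t).card) :
    ∑ i, s (g i) < ∑ i, s (f i) := by
  set d : ℕ → ℝ := fun t => s ⟨min t (m-1), by omega⟩ with hd
  have hdmono : ∀ t, t < m - 1 → d (t+1) ≤ d t := by
    intro t ht
    apply hmono
    simp only [Fin.le_def]
    omega
  have key : ∀ r : Fin m, s r
      = d (m-1) + ∑ t ∈ Finset.range (m-1), (if r.val ≤ t then d t - d (t+1) else 0) := by
    intro r
    have hrle : r.val ≤ m - 1 := by omega
    have h1 : ∑ t ∈ Finset.range (m-1), (if r.val ≤ t then d t - d (t+1) else 0)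
        = ∑ t ∈ Finset.Ico r.val (m-1), (d t - d (t+1)) := by
      rw [← Finset.sum_filter]
      congr 1
      ext t
      simp only [Finset.mem_filter, Finset.mem_range, Finset.mem_Ico]
      omega
    have h2 : ∑ t ∈ Finset.Ico r.val (m-1), (d t - d (t+1)) = d r.val - d (m-1) := by
      rw [Finset.sum_Ico_eq_sub _ hrle, Finset.sum_range_sub' d, Finset.sum_range_sub' d]
      ring
    have h3 : d r.val = s r := by
      have e : (⟨min r.val (m-1), by omega⟩ : Fin m) = r := by
        apply Fin.ext
        simp
        omega
      rw [hd]
      try simp only []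
      rw [e]
    rw [h1, h2, h3]
    ring
  have expand : ∀ F : Fin n → Fin m, ∑ i, s (F i)
      = n * d (m-1) + ∑ t ∈ Finset.range (m-1),
          (d t - d (t+1)) * (((univ : Finset (Fin n)).filter fun i => (F i).val ≤ t).card : ℝ) := by
    intro F
    have e1 : ∑ i, s (F i)
        = ∑ i : Fin n, (d (m-1) + ∑ t ∈ Finset.range (m-1), (if (F i).val ≤ t then d t - d (t+1) else 0)) :=
      Finset.sum_congr rfl fun i _ => key (F i)
    rw [e1, Finset.sum_add_distrib, Finset.sum_const, Finset.card_univ, Fintype.card_fin,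
      nsmul_eq_mul, Finset.sum_comm]
    congr 1
    apply Finset.sum_congr rfl
    intro t _
    rw [Finset.card_filter]
    push_cast
    rw [Finset.mul_sum]
    apply Finset.sum_congr rfl
    intro i _
    split <;> simp
  rw [expand f, expand g]
  have step : ∀ t ∈ Finset.range (m-1),
      (d t - d (t+1)) * (((univ : Finset (Fin n)).filter fun i => (g i).val ≤ t).card : ℝ)
        + (d t - d (t+1))
      ≤ (d t - d (t+1)) * (((univ : Finset (Fin n)).filter fun i => (f i).val ≤ t).card : ℝ) := by
    intro t ht
    rw [Finset.mem_range] at ht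
    have hnn : (0:ℝ) ≤ d t - d (t+1) := by have := hdmono t ht; linarith
    have hcard := h t ht
    have hc : (((univ : Finset (Fin n)).filter fun i => (g i).val ≤ t).card : ℝ) + 1
        ≤ (((univ : Finset (Fin n)).filter fun i => (f i).val ≤ t).card : ℝ) := by
      exact_mod_cast hcard
    nlinarith
  have hsum := Finset.sum_le_sum step
  rw [Finset.sum_add_distrib, Finset.sum_range_sub' d] at hsum
  have e0 : d 0 = s ⟨0, by omega⟩ := by
    rw [hd]
    try simp only []
    congr 1
  have eLst : d (m-1) = s ⟨m-1, by omega⟩ := by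
    rw [hd]
    try simp only []
    congr 1
    apply Fin.ext
    simp
  rw [e0, eLst] at hsum
  linarith [hstrict]

end Stmt7Aux

open Stmt7Aux

/-- For any `m ≥ 3`, any scoring vector `s` with `s 0 ≥ ... ≥ s (m-1)` and
`s 0 > s (m-1)`, any `n ≥ 8m + 49`, and any distinct alternatives `a ≠ b`, there is a
profile of `n` linear orders (given as rank functions: `P i c` is the rank of `c` in vote `i`,
smaller is better) in which `a` is the Condorcet winner and `b` is the unique winner of the
positional scoring rule with vector `s`. -/
theorem stmt7 (m : ℕ) (hm : 3 ≤ m) (s : Fin m → ℝ)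
    (hmono : ∀ i j : Fin m, i ≤ j → s j ≤ s i)
    (hstrict : s ⟨m - 1, by omega⟩ < s ⟨0, by omega⟩)
    (n : ℕ) (hn : 8 * m + 49 ≤ n) (a b : Fin m) (hab : a ≠ b) :
    ∃ P : Fin n → (Fin m ≃ Fin m),
      (∀ c, c ≠ a →
        (Finset.univ.filter fun i => P i c < P i a).card <
        (Finset.univ.filter fun i => P i a < P i c).card) ∧
      (∀ c, c ≠ b → ∑ i, s (P i c) < ∑ i, s (P i b)) := by
  classical
  obtain ⟨o0, ho0⟩ : ∃ x : Fin m, x.val = 0 := ⟨⟨0, by omega⟩, rfl⟩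
  obtain ⟨o1, ho1⟩ : ∃ x : Fin m, x.val = 1 := ⟨⟨1, by omega⟩, rfl⟩
  obtain ⟨o2, ho2⟩ : ∃ x : Fin m, x.val = 2 := ⟨⟨2, by omega⟩, rfl⟩
  obtain ⟨oL, hoL⟩ : ∃ x : Fin m, x.val = m - 1 := ⟨⟨m - 1, by omega⟩, rfl⟩
  have hne01 : o0 ≠ o1 := fun h => by have := congrArg Fin.val h; omega
  have hne0L : o0 ≠ oL := fun h => by have := congrArg Fin.val h; omega
  have hne1L : o1 ≠ oL := fun h => by have := congrArg Fin.val h; omega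
  have hne02 : o0 ≠ o2 := fun h => by have := congrArg Fin.val h; omega
  have hne12 : o1 ≠ o2 := fun h => by have := congrArg Fin.val h; omega
  obtain ⟨g, hga, hgb⟩ : ∃ g : Fin m ≃ Fin m, g.symm a = o1 ∧ g.symm b = o0 := by
    refine ⟨((Equiv.swap o0 b).trans (Equiv.swap o1 (Equiv.swap o0 b a))).symm, ?_, ?_⟩
    · rw [Equiv.symm_symm, Equiv.trans_apply, Equiv.swap_apply_right]
    · rw [Equiv.symm_symm, Equiv.trans_apply, Equiv.swap_apply_right]
      apply Equiv.swap_apply_of_ne_of_ne hne01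
      intro hh
      apply hab
      apply (Equiv.swap o0 b).injective
      rw [← hh, Equiv.swap_apply_right]
  obtain ⟨k, r, hn2, hr⟩ : ∃ k r : ℕ, n = 2*m + 14 + 2*k + r ∧ r ≤ 1 :=
    ⟨(n - (2*m + 14))/2, (n - (2*m+14)) % 2, by omega, by omega⟩
  obtain ⟨eL, heLlen, heLmem, hmemeL⟩ :
      ∃ l : List (Fin m), l.length = m - 2 ∧ (∀ x ∈ l, 2 ≤ x.val) ∧
        (∀ j : Fin m, 2 ≤ j.val → j ∈ l) := by
    refine ⟨(List.range (m-2)).pmap (fun i h => (⟨i + 2, h⟩ : Fin m))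
      (fun i hi => by have := List.mem_range.mp hi; omega), by simp, ?_, ?_⟩
    · intro x hx
      obtain ⟨i, hi, rfl⟩ := List.mem_pmap.mp hx
      simp
    · intro j hj
      apply List.mem_pmap.mpr
      refine ⟨j.val - 2, List.mem_range.mpr (by omega), ?_⟩
      apply Fin.ext
      simp
      omega
  obtain ⟨Vy, hVy⟩ : ∃ v : Fin m ≃ Fin m, v = g.symm.trans (Equiv.swap o1 oL) := ⟨_, rfl⟩
  obtain ⟨Vy2, hVy2⟩ : ∃ v : Fin m ≃ Fin m, v = g.symm.trans (Equiv.refl (Fin m)) := ⟨_, rfl⟩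
  obtain ⟨Vz, hVz⟩ : ∃ v : Fin m ≃ Fin m, v = g.symm.trans (Equiv.swap o0 o1) := ⟨_, rfl⟩
  obtain ⟨Vzl, hVzl⟩ : ∃ v : Fin m → Fin m ≃ Fin m,
      v = fun j => g.symm.trans ((Equiv.swap j oL).trans (Equiv.swap o0 o1)) := ⟨_, rfl⟩
  obtain ⟨Vx, hVx⟩ : ∃ v : Fin m ≃ Fin m, v = g.symm.trans (Equiv.swap o0 o2) := ⟨_, rfl⟩
  obtain ⟨L, hLdef⟩ : ∃ L : List (Fin m ≃ Fin m),
      L = List.replicate (m+2+k+r) Vy ++ List.replicate 4 Vy2 ++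
          List.replicate (6+k) Vz ++ eL.map Vzl ++ List.replicate 4 Vx := ⟨_, rfl⟩
  have hlen : L.length = n := by
    rw [hLdef]
    simp only [List.length_append, List.length_replicate, List.length_map, heLlen]
    omega
  have keyCount : ∀ (q : (Fin m ≃ Fin m) → Prop) (inst : DecidablePred q),
      ((univ : Finset (Fin n)).filter fun i => q (L.get (Fin.cast hlen.symm i))).card
      = (if q Vy then (m+2+k+r) else 0) + ((if q Vy2 then 4 else 0) + ((if q Vz then (6+k) else 0)
        + (((eL.map fun j => if q (Vzl j) then (1:ℕ) else 0).sum) + (if q Vx then 4 else 0)))) := by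
    intro q inst
    rw [card_filter_eq L hlen q, hLdef]
    simp only [List.map_append, List.sum_append, List.map_map, Function.comp_def]
    rw [sum_ind_replicate, sum_ind_replicate, sum_ind_replicate, sum_ind_replicate]
    ring
  have happ : ∀ (τ : Fin m ≃ Fin m) (c : Fin m), (g.symm.trans τ) c = τ (g.symm c) :=
    fun _ _ => rfl
  have hsw01 : ∀ x : Fin m, 2 ≤ x.val → (Equiv.swap o0 o1) x = x := by
    intro x hx
    apply Equiv.swap_apply_of_ne_of_ne
    · intro h; rw [h] at hx; omega
    · intro h; rw [h] at hx; omega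
  have hVyb : Vy b = o0 := by
    rw [hVy, happ, hgb]
    exact Equiv.swap_apply_of_ne_of_ne hne01 hne0L
  have hVya : Vy a = oL := by
    rw [hVy, happ, hga, Equiv.swap_apply_left]
  have hVyE : ∀ c : Fin m, 2 ≤ (g.symm c).val → 1 ≤ (Vy c).val := by
    intro c hc
    rw [hVy, happ]
    rcases eq_or_ne (g.symm c) oL with h | h
    · rw [h, Equiv.swap_apply_right, ho1]
    · rw [Equiv.swap_apply_of_ne_of_ne (fun hh => by rw [hh] at hc; omega) h]
      omega
  have hVyElt : ∀ c : Fin m, 2 ≤ (g.symm c).val → (Vy c).val < m - 1 := by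
    intro c hc
    rw [hVy, happ]
    rcases eq_or_ne (g.symm c) oL with h | h
    · rw [h, Equiv.swap_apply_right, ho1]; omega
    · rw [Equiv.swap_apply_of_ne_of_ne (fun hh => by rw [hh] at hc; omega) h]
      have : (g.symm c).val ≠ m - 1 := fun hh => h (Fin.ext (by rw [hh, hoL]))
      have := (g.symm c).isLt
      omega
  have hVy2v : ∀ c : Fin m, Vy2 c = g.symm c := by
    intro c; rw [hVy2, happ, Equiv.refl_apply]
  have hVzb : Vz b = o1 := by
    rw [hVz, happ, hgb, Equiv.swap_apply_left]
  have hVza : Vz a = o0 := by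
    rw [hVz, happ, hga, Equiv.swap_apply_right]
  have hVzE : ∀ c : Fin m, 2 ≤ (g.symm c).val → Vz c = g.symm c := by
    intro c hc
    rw [hVz, happ]
    exact hsw01 _ hc
  have hVzlb : ∀ j : Fin m, 2 ≤ j.val → Vzl j b = o1 := by
    intro j hj
    rw [hVzl]
    try simp only []
    rw [happ, hgb, Equiv.trans_apply]
    rw [Equiv.swap_apply_of_ne_of_ne (fun hh => by rw [← hh] at hj; omega) hne0L]
    exact Equiv.swap_apply_left o0 o1
  have hVzla : ∀ j : Fin m, 2 ≤ j.val → Vzl j a = o0 := by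
    intro j hj
    rw [hVzl]
    try simp only []
    rw [happ, hga, Equiv.trans_apply]
    rw [Equiv.swap_apply_of_ne_of_ne (fun hh => by rw [← hh] at hj; omega) hne1L]
    exact Equiv.swap_apply_right o0 o1
  have hVzlE : ∀ j : Fin m, 2 ≤ j.val → ∀ c : Fin m, 2 ≤ (g.symm c).val →
      2 ≤ ((Vzl j) c).val := by
    intro j hj c hc
    rw [hVzl]
    try simp only []
    rw [happ, Equiv.trans_apply]
    rcases eq_or_ne (g.symm c) j with h | h
    · rw [h, Equiv.swap_apply_left, hsw01 _ (by omega : 2 ≤ oL.val), hoL]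
      omega
    · rcases eq_or_ne (g.symm c) oL with h2 | h2
      · rw [h2, Equiv.swap_apply_right, hsw01 _ hj]
        omega
      · rw [Equiv.swap_apply_of_ne_of_ne h h2, hsw01 _ hc]
        omega
  have hVzlself : ∀ c : Fin m, 2 ≤ (g.symm c).val → (Vzl (g.symm c)) c = oL := by
    intro c hc
    rw [hVzl]
    try simp only []
    rw [happ, Equiv.trans_apply, Equiv.swap_apply_left, hsw01 _ (by omega : 2 ≤ oL.val)]
  have hVxb : Vx b = o2 := by
    rw [hVx, happ, hgb, Equiv.swap_apply_left]
  have hVxa : Vx a = o1 := by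
    rw [hVx, happ, hga]
    exact Equiv.swap_apply_of_ne_of_ne hne01.symm hne12
  refine ⟨fun i => L.get (Fin.cast hlen.symm i), ?_, ?_⟩
  · -- Condorcet winner : a beats every c ≠ a
    intro c hc
    have hjca : g.symm c ≠ o1 := by
      intro h
      exact hc (g.symm.injective (h.trans hga.symm))
    have hvals : (g.symm c).val = 0 ∨ 2 ≤ (g.symm c).val := by
      have : (g.symm c).val ≠ 1 := fun h => hjca (Fin.ext (by rw [h, ho1]))
      omega
    rw [keyCount (fun v => v c < v a) inferInstance,
        keyCount (fun v => v a < v c) inferInstance]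
    rcases hvals with hv0 | hv2
    · -- c sits at position 0, i.e. c = b
      have hc0 : g.symm c = o0 := Fin.ext (by rw [hv0, ho0])
      have hVyc : Vy c = o0 := by
        rw [hVy, happ, hc0]
        exact Equiv.swap_apply_of_ne_of_ne hne01 hne0L
      have hVy2c : Vy2 c = o0 := by rw [hVy2v, hc0]
      have hVzc : Vz c = o1 := by rw [hVz, happ, hc0]; exact Equiv.swap_apply_left o0 o1
      have hVzlc : ∀ j : Fin m, 2 ≤ j.val → Vzl j c = o1 := by
        intro j hj
        rw [hVzl]
        try simp only []
        rw [happ, hc0, Equiv.trans_apply]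
        rw [Equiv.swap_apply_of_ne_of_ne (fun hh => by rw [← hh] at hj; omega) hne0L]
        exact Equiv.swap_apply_left o0 o1
      have hVxc : Vx c = o2 := by rw [hVx, happ, hc0]; exact Equiv.swap_apply_left o0 o2
      rw [if_pos (show Vy c < Vy a by rw [hVyc, hVya, Fin.lt_def, ho0, hoL]; omega),
          if_neg (show ¬ Vy a < Vy c by rw [hVyc, hVya, Fin.lt_def, ho0, hoL]; omega),
          if_pos (show Vy2 c < Vy2 a by
            rw [hVy2c, hVy2v a, hga, Fin.lt_def, ho0, ho1]; omega),
          if_neg (show ¬ Vy2 a < Vy2 c by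
            rw [hVy2c, hVy2v a, hga, Fin.lt_def, ho0, ho1]; omega),
          if_neg (show ¬ Vz c < Vz a by rw [hVzc, hVza, Fin.lt_def, ho0, ho1]; omega),
          if_pos (show Vz a < Vz c by rw [hVzc, hVza, Fin.lt_def, ho0, ho1]; omega),
          if_neg (show ¬ Vx c < Vx a by rw [hVxc, hVxa, Fin.lt_def, ho1, ho2]; omega),
          if_pos (show Vx a < Vx c by rw [hVxc, hVxa, Fin.lt_def, ho1, ho2]; omega),
          sum_ind_eq_zero (q := fun j => Vzl j c < Vzl j a) eL (by
            intro x hx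
            try simp only []
            have h2 := heLmem x hx
            rw [hVzlc x h2, hVzla x h2, Fin.lt_def, ho0, ho1]
            omega),
          sum_ind_eq_length (q := fun j => Vzl j a < Vzl j c) eL (by
            intro x hx
            try simp only []
            have h2 := heLmem x hx
            rw [hVzlc x h2, hVzla x h2, Fin.lt_def, ho0, ho1]
            omega), heLlen]
      omega
    · -- c is some other alternative
      have hVyclt : Vy c < Vy a := by
        rw [hVya, Fin.lt_def, hoL]
        exact hVyElt c hv2
      rw [if_pos hVyclt,
          if_neg (show ¬ Vy a < Vy c by
            rw [hVya, Fin.lt_def, hoL]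
            have := (Vy c).isLt
            omega),
          if_neg (show ¬ Vy2 c < Vy2 a by
            rw [hVy2v c, hVy2v a, hga, Fin.lt_def, ho1]; omega),
          if_pos (show Vy2 a < Vy2 c by
            rw [hVy2v c, hVy2v a, hga, Fin.lt_def, ho1]; omega),
          if_neg (show ¬ Vz c < Vz a by
            rw [hVzE c hv2, hVza, Fin.lt_def, ho0]; omega),
          if_pos (show Vz a < Vz c by
            rw [hVzE c hv2, hVza, Fin.lt_def, ho0]; omega),
          sum_ind_eq_zero (q := fun j => Vzl j c < Vzl j a) eL (by
            intro x hx
            try simp only []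
            have h2 := heLmem x hx
            have h3 := hVzlE x h2 c hv2
            rw [hVzla x h2, Fin.lt_def, ho0]
            omega),
          sum_ind_eq_length (q := fun j => Vzl j a < Vzl j c) eL (by
            intro x hx
            try simp only []
            have h2 := heLmem x hx
            have h3 := hVzlE x h2 c hv2
            rw [hVzla x h2, Fin.lt_def, ho0]
            omega), heLlen]
      have hx1 : (if Vx c < Vx a then (4:ℕ) else 0) ≤ 4 := by split <;> omega
      have hx2 : (0:ℕ) ≤ (if Vx a < Vx c then (4:ℕ) else 0) := by omega
      omega
  · -- b is the unique scoring winner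
    intro c hc
    refine abel_score (by omega) s hmono hstrict
      (fun i => L.get (Fin.cast hlen.symm i) b) (fun i => L.get (Fin.cast hlen.symm i) c) ?_
    intro t ht
    rw [keyCount (fun v => (v c).val ≤ t) inferInstance,
        keyCount (fun v => (v b).val ≤ t) inferInstance]
    have hjcb : g.symm c ≠ o0 := by
      intro h
      exact hc (g.symm.injective (h.trans hgb.symm))
    have hvals : (g.symm c).val = 1 ∨ 2 ≤ (g.symm c).val := by
      have : (g.symm c).val ≠ 0 := fun h => hjcb (Fin.ext (by rw [h, ho0]))
      omega
    -- facts about b's ranks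
    have hb1 : (Vy b).val ≤ t := by rw [hVyb, ho0]; omega
    have hb2 : (Vy2 b).val ≤ t := by rw [hVy2v, hgb, ho0]; omega
    rw [if_pos hb1, if_pos hb2]
    rcases hvals with hv1 | hv2
    · -- c = a
      have hca : c = a := g.symm.injective ((Fin.ext (by rw [hv1, ho1])).trans hga.symm)
      subst hca
      by_cases ht1 : 1 ≤ t
      · rw [if_pos (show (Vz b).val ≤ t by rw [hVzb, ho1]; omega),
            sum_ind_eq_length (q := fun j => ((Vzl j) b).val ≤ t) eL (by
              intro x hx
              try simp only []
              have h2 := heLmem x hx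
              rw [hVzlb x h2, ho1]
              omega), heLlen,
            if_neg (show ¬ (Vy c).val ≤ t by rw [hVya, hoL]; omega),
            if_pos (show (Vy2 c).val ≤ t by rw [hVy2v, hga, ho1]; omega),
            if_pos (show (Vz c).val ≤ t by rw [hVza, ho0]; omega),
            sum_ind_eq_length (q := fun j => ((Vzl j) c).val ≤ t) eL (by
              intro x hx
              try simp only []
              have h2 := heLmem x hx
              rw [hVzla x h2, ho0]
              omega), heLlen,
            if_pos (show (Vx c).val ≤ t by rw [hVxa, ho1]; omega)]
        by_cases ht2 : 2 ≤ t
        · rw [if_pos (show (Vx b).val ≤ t by rw [hVxb, ho2]; omega)]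
          omega
        · rw [if_neg (show ¬ (Vx b).val ≤ t by rw [hVxb, ho2]; omega)]
          omega
      · rw [if_neg (show ¬ (Vz b).val ≤ t by rw [hVzb, ho1]; omega),
            if_neg (show ¬ (Vx b).val ≤ t by rw [hVxb, ho2]; omega),
            sum_ind_eq_zero (q := fun j => ((Vzl j) b).val ≤ t) eL (by
              intro x hx
              try simp only []
              have h2 := heLmem x hx
              rw [hVzlb x h2, ho1]
              omega),
            if_neg (show ¬ (Vy c).val ≤ t by rw [hVya, hoL]; omega),
            if_neg (show ¬ (Vy2 c).val ≤ t by rw [hVy2v, hga, ho1]; omega),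
            if_pos (show (Vz c).val ≤ t by rw [hVza, ho0]; omega),
            sum_ind_eq_length (q := fun j => ((Vzl j) c).val ≤ t) eL (by
              intro x hx
              try simp only []
              have h2 := heLmem x hx
              rw [hVzla x h2, ho0]
              omega), heLlen,
            if_neg (show ¬ (Vx c).val ≤ t by rw [hVxa, ho1]; omega)]
        omega
    · -- c is one of the others
      have hcy : (if (Vy c).val ≤ t then (m+2+k+r) else 0) ≤ m+2+k+r := by split <;> omega
      have hcx : (if (Vx c).val ≤ t then (4:ℕ) else 0) ≤ 4 := by split <;> omega
      by_cases ht1 : 1 ≤ t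
      · rw [if_pos (show (Vz b).val ≤ t by rw [hVzb, ho1]; omega),
            sum_ind_eq_length (q := fun j => ((Vzl j) b).val ≤ t) eL (by
              intro x hx
              try simp only []
              have h2 := heLmem x hx
              rw [hVzlb x h2, ho1]
              omega), heLlen]
        by_cases ht2 : 2 ≤ t
        · -- t ≥ 2 : use that c is ranked last in one of the rotation votes
          rw [if_pos (show (Vx b).val ≤ t by rw [hVxb, ho2]; omega)]
          have hzc : (if (Vz c).val ≤ t then (6+k) else 0) ≤ 6+k := by split <;> omega
          have hy2c : (if (Vy2 c).val ≤ t then (4:ℕ) else 0) ≤ 4 := by split <;> omega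
          have hsum : ((eL.map fun j => if ((Vzl j) c).val ≤ t then (1:ℕ) else 0).sum) + 1
              ≤ m - 2 := by
            rw [← heLlen]
            apply sum_ind_succ_le
            refine ⟨g.symm c, hmemeL _ hv2, ?_⟩
            rw [hVzlself c hv2, hoL]
            omega
          omega
        · rw [if_neg (show ¬ (Vx b).val ≤ t by rw [hVxb, ho2]; omega),
              if_neg (show ¬ (Vy2 c).val ≤ t by rw [hVy2v]; omega),
              if_neg (show ¬ (Vz c).val ≤ t by rw [hVzE c hv2]; omega),
              sum_ind_eq_zero (q := fun j => ((Vzl j) c).val ≤ t) eL (by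
                intro x hx
                try simp only []
                have h2 := heLmem x hx
                have h3 := hVzlE x h2 c hv2
                omega)]
          omega
      · rw [if_neg (show ¬ (Vz b).val ≤ t by rw [hVzb, ho1]; omega),
            if_neg (show ¬ (Vx b).val ≤ t by rw [hVxb, ho2]; omega),
            sum_ind_eq_zero (q := fun j => ((Vzl j) b).val ≤ t) eL (by
              intro x hx
              try simp only []
              have h2 := heLmem x hx
              rw [hVzlb x h2, ho1]
              omega),
            if_neg (show ¬ (Vy c).val ≤ t by have := hVyE c hv2; omega),
            if_neg (show ¬ (Vy2 c).val ≤ t by rw [hVy2v]; omega),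
            if_neg (show ¬ (Vz c).val ≤ t by rw [hVzE c hv2]; omega),
            sum_ind_eq_zero (q := fun j => ((Vzl j) c).val ≤ t) eL (by
              intro x hx
              try simp only []
              have h2 := heLmem x hx
              have h3 := hVzlE x h2 c hv2
              omega)]
        omega
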